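/- If log(p/q)/log((1−q)/(1−p)) is irrational, then for every x ∈ (0,1) the set P(x) = { x_{ℓ,d} : ℓ, d nonnegative integers } is dense in [0,1], i.e. the closure of P(x) contains the interval [0,1]. -/

import Mathlib

/-- The updated prior after `ℓ` likes and `d` dislikes. -/
noncomputable def updatedPrior (p q x : ℝ) (ℓ d : ℕ) : ℝ :=
  x * p ^ ℓ * (1 - p) ^ d /
    (x * p ^ ℓ * (1 - p) ^ d + (1 - x) * q ^ ℓ * (1 - q) ^ d)

open Real

lemma near_aux (t ε s u : ℝ) (hε : 0 < ε) (hs : 0 < s) (hsε : s < ε) (hu : u < t) :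
    ∃ k : ℕ, |u + k * s - t| < ε := by
  classical
  have hne : ∃ k : ℕ, t ≤ u + k * s := by
    obtain ⟨k, hk⟩ := exists_nat_ge ((t - u) / s)
    refine ⟨k, ?_⟩
    have := (div_le_iff₀ hs).mp hk
    linarith
  set k := Nat.find hne with hkdef
  have hk : t ≤ u + k * s := Nat.find_spec hne
  have hk0 : k ≠ 0 := by
    intro h
    rw [h] at hk
    push_cast at hk
    linarith
  have hlt : ¬ t ≤ u + ((k - 1 : ℕ) : ℝ) * s := Nat.find_min hne (Nat.pred_lt hk0)
  push_neg at hlt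
  have hcast : ((k - 1 : ℕ) : ℝ) = (k : ℝ) - 1 := by
    have h1 : 1 ≤ k := Nat.one_le_iff_ne_zero.mpr hk0
    push_cast [Nat.cast_sub h1]
    ring
  rw [hcast] at hlt
  refine ⟨k, abs_lt.mpr ⟨by linarith, by nlinarith⟩⟩

lemma small_elem (a b : ℝ) (ha : 0 < a) (hb : 0 < b)
    (hirr : Irrational (a / b)) (ε : ℝ) (hε : 0 < ε) :
    ∃ ℓ d : ℕ, (ℓ : ℝ) * a - d * b ≠ 0 ∧ |(ℓ : ℝ) * a - d * b| < ε := by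
  rcases AddSubgroup.dense_or_cyclic (AddSubgroup.closure {a, b}) with hdense | ⟨g, hg⟩
  · -- dense case
    set δ := min ε (min a b) with hδ
    have hδ0 : 0 < δ := by positivity
    have hmem := hdense (δ / 2)
    rw [Metric.mem_closure_iff] at hmem
    obtain ⟨y, hyG, hyd⟩ := hmem (δ / 2) (by positivity)
    rw [Real.dist_eq] at hyd
    rcases abs_lt.mp hyd with ⟨h1, h2⟩
    have hy0 : 0 < y := by linarith
    have hyδ : y < δ := by linarith
    have hyε : y < ε := lt_of_lt_of_le hyδ (min_le_left _ _)
    have hya : y < a := lt_of_lt_of_le hyδ (le_trans (min_le_right _ _) (min_le_left _ _))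
    have hyb : y < b := lt_of_lt_of_le hyδ (le_trans (min_le_right _ _) (min_le_right _ _))
    obtain ⟨m, n, hmn⟩ := AddSubgroup.mem_closure_pair.mp hyG
    rw [zsmul_eq_mul, zsmul_eq_mul] at hmn
    rcases le_or_gt 0 m with hm | hm <;> rcases le_or_gt 0 n with hn | hn
    · -- both nonneg: contradiction
      exfalso
      have hm' : (0 : ℝ) ≤ m := by exact_mod_cast hm
      have hn' : (0 : ℝ) ≤ n := by exact_mod_cast hn
      rcases eq_or_lt_of_le hm with hm0 | hm1
      · rcases eq_or_lt_of_le hn with hn0 | hn1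
        · rw [← hm0, ← hn0] at hmn; push_cast at hmn; linarith
        · have : (1 : ℝ) ≤ n := by exact_mod_cast hn1
          nlinarith
      · have : (1 : ℝ) ≤ m := by exact_mod_cast hm1
        nlinarith
    · -- m ≥ 0, n < 0 : y itself
      refine ⟨m.toNat, (-n).toNat, ?_, ?_⟩
      all_goals {
        have h1 : ((m.toNat : ℕ) : ℝ) = (m : ℝ) := by exact_mod_cast Int.toNat_of_nonneg hm
        have h2 : (((-n).toNat : ℕ) : ℝ) = -(n : ℝ) := by
          exact_mod_cast Int.toNat_of_nonneg (by omega : (0:ℤ) ≤ -n)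
        have hval : ((m.toNat : ℕ) : ℝ) * a - ((-n).toNat : ℕ) * b = y := by
          rw [h1, h2, ← hmn]; ring
        rw [hval]
        first
          | exact ne_of_gt hy0
          | { rw [abs_of_pos hy0]; exact hyε }
      }
    · -- m < 0, n ≥ 0 : -y
      refine ⟨(-m).toNat, n.toNat, ?_, ?_⟩
      all_goals {
        have h1 : (((-m).toNat : ℕ) : ℝ) = -(m : ℝ) := by
          exact_mod_cast Int.toNat_of_nonneg (by omega : (0:ℤ) ≤ -m)
        have h2 : ((n.toNat : ℕ) : ℝ) = (n : ℝ) := by exact_mod_cast Int.toNat_of_nonneg hn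
        have hval : (((-m).toNat : ℕ) : ℝ) * a - (n.toNat : ℕ) * b = -y := by
          rw [h1, h2, ← hmn]; ring
        rw [hval]
        first
          | exact neg_ne_zero.mpr (ne_of_gt hy0)
          | { rw [abs_neg, abs_of_pos hy0]; exact hyε }
      }
    · -- both negative: contradiction
      exfalso
      have hm' : (m : ℝ) ≤ -1 := by exact_mod_cast (by omega : m ≤ -1)
      have hn' : (n : ℝ) ≤ -1 := by exact_mod_cast (by omega : n ≤ -1)
      nlinarith
  · -- cyclic case: contradiction with irrationality
    exfalso
    have haG : a ∈ AddSubgroup.closure ({a, b} : Set ℝ) :=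
      AddSubgroup.subset_closure (by simp)
    have hbG : b ∈ AddSubgroup.closure ({a, b} : Set ℝ) :=
      AddSubgroup.subset_closure (by simp)
    rw [hg, AddSubgroup.mem_closure_singleton] at haG hbG
    obtain ⟨m, hm⟩ := haG
    obtain ⟨n, hn⟩ := hbG
    rw [zsmul_eq_mul] at hm hn
    have hg0 : g ≠ 0 := by
      intro h
      rw [h, mul_zero] at hm
      linarith
    have hn0 : (n : ℝ) ≠ 0 := by
      intro h
      rw [h, zero_mul] at hn
      linarith
    apply hirr
    refine ⟨(m : ℚ) / (n : ℚ), ?_⟩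
    push_cast
    rw [← hm, ← hn]
    field_simp

lemma dense_lattice (a b : ℝ) (ha : 0 < a) (hb : 0 < b)
    (hirr : Irrational (a / b)) :
    Dense {t : ℝ | ∃ ℓ d : ℕ, t = (ℓ : ℝ) * a - d * b} := by
  rw [Metric.dense_iff]
  intro t ε hε
  obtain ⟨ℓ₁, d₁, hs0, hsε⟩ := small_elem a b ha hb hirr ε hε
  set s := (ℓ₁ : ℝ) * a - d₁ * b with hs
  rcases hs0.lt_or_gt with hneg | hpos
  · -- s < 0: descend from ℓ₀ * a
    obtain ⟨ℓ₀, hℓ₀⟩ := exists_nat_gt (t / a)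
    have hu : t < (ℓ₀ : ℝ) * a := by
      have := (div_lt_iff₀ ha).mp hℓ₀; linarith
    have habs : -s < ε := by rwa [abs_of_neg hneg] at hsε
    obtain ⟨k, hk⟩ := near_aux (-t) ε (-s) (-((ℓ₀ : ℝ) * a)) hε (by linarith) habs
      (by linarith)
    refine ⟨(ℓ₀ : ℝ) * a + k * s, ?_, ⟨ℓ₀ + k * ℓ₁, k * d₁, by push_cast; ring⟩⟩
    rw [Metric.mem_ball, Real.dist_eq]
    have heq : -((ℓ₀:ℝ) * a) + k * (-s) - -t = -((ℓ₀:ℝ) * a + k * s - t) := by ring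
    rwa [heq, abs_neg] at hk
  · obtain ⟨d₀, hd₀⟩ := exists_nat_gt (-t / b)
    have hu : -((d₀ : ℝ) * b) < t := by
      have := (div_lt_iff₀ hb).mp hd₀; linarith
    have habs : s < ε := by rwa [abs_of_pos hpos] at hsε
    obtain ⟨k, hk⟩ := near_aux t ε s (-((d₀ : ℝ) * b)) hε hpos habs hu
    refine ⟨-((d₀ : ℝ) * b) + k * s, ?_, ⟨k * ℓ₁, d₀ + k * d₁, by push_cast; ring⟩⟩
    rw [Metric.mem_ball, Real.dist_eq]
    exact hk

/-- If `log(p/q)/log((1−q)/(1−p))` is irrational then, for every `x ∈ (0,1)`, the set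
of possible updated priors `P(x) = { x_{ℓ,d} : ℓ, d ∈ ℕ }` is dense in `[0,1]`. -/
theorem updatedPriors_dense_of_irrational (p q : ℝ) (hq0 : 0 < q) (hqp : q < p)
    (hp1 : p < 1)
    (hirr : Irrational (Real.log (p / q) / Real.log ((1 - q) / (1 - p))))
    (x : ℝ) (hx : x ∈ Set.Ioo (0 : ℝ) 1) :
    Set.Icc (0 : ℝ) 1 ⊆ closure {z : ℝ | ∃ ℓ d : ℕ, z = updatedPrior p q x ℓ d} := by
  obtain ⟨hx0, hx1⟩ := hx
  have hp0 : 0 < p := lt_trans hq0 hqp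
  have h1p : 0 < 1 - p := by linarith
  have h1q : 0 < 1 - q := by linarith
  have h1x : 0 < 1 - x := by linarith
  set a := Real.log (p / q) with hadef
  set b := Real.log ((1 - q) / (1 - p)) with hbdef
  have ha : 0 < a := Real.log_pos ((one_lt_div hq0).mpr hqp)
  have hb : 0 < b := Real.log_pos ((one_lt_div h1p).mpr (by linarith))
  have hdense := dense_lattice a b ha hb hirr
  set c := Real.log (x / (1 - x)) with hcdef
  set S := {t : ℝ | ∃ ℓ d : ℕ, t = (ℓ : ℝ) * a - d * b} with hS
  set P := {z : ℝ | ∃ ℓ d : ℕ, z = updatedPrior p q x ℓ d} with hP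
  set f : ℝ → ℝ := fun u => Real.exp (c + u) / (Real.exp (c + u) + 1) with hf
  have hcont : Continuous f := by
    apply Continuous.div
    · fun_prop
    · fun_prop
    · intro u; positivity
  have himg : ∀ s ∈ S, f s ∈ P := by
    rintro s ⟨ℓ, d, rfl⟩
    refine ⟨ℓ, d, Eq.symm ?_⟩
    have e1 : Real.exp c = x / (1 - x) := Real.exp_log (by positivity)
    have e2 : Real.exp (c + ((ℓ:ℝ) * a - (d:ℝ) * b))
        = (x / (1 - x)) * (p / q) ^ ℓ / ((1 - q) / (1 - p)) ^ d := by
      rw [show c + ((ℓ:ℝ) * a - (d:ℝ) * b) = c + (ℓ:ℝ) * a - (d:ℝ) * b by ring,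
        Real.exp_sub, Real.exp_add, Real.exp_nat_mul, Real.exp_nat_mul, e1, hadef, hbdef,
        Real.exp_log (by positivity), Real.exp_log (by positivity)]
    show updatedPrior p q x ℓ d = f ((ℓ:ℝ) * a - (d:ℝ) * b)
    rw [hf]
    simp only
    rw [e2, updatedPrior]
    have hqℓ : (0:ℝ) < q ^ ℓ := by positivity
    have h1qd : (0:ℝ) < (1 - q) ^ d := by positivity
    have hD : (0:ℝ) < x * p ^ ℓ * (1 - p) ^ d + (1 - x) * q ^ ℓ * (1 - q) ^ d := by
      positivity
    have hA1 : (0:ℝ) < x / (1 - x) * (p / q) ^ ℓ / ((1 - q) / (1 - p)) ^ d + 1 := by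
      positivity
    simp only [div_pow]
    field_simp
  have hIoo : Set.Ioo (0:ℝ) 1 ⊆ closure P := by
    intro y hy
    obtain ⟨hy0, hy1⟩ := hy
    have h1y : 0 < 1 - y := by linarith
    set t := Real.log (y / (1 - y)) - c with htdef
    have hft : f t = y := by
      rw [hf]
      simp only
      rw [show c + t = Real.log (y / (1 - y)) by rw [htdef]; ring,
        Real.exp_log (by positivity)]
      field_simp
      ring
    have hmem : f t ∈ closure (f '' S) :=
      image_closure_subset_closure_image hcont ⟨t, hdense t, rfl⟩
    have hsub : f '' S ⊆ P := Set.image_subset_iff.mpr himg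
    rw [← hft]
    exact closure_mono hsub hmem
  calc Set.Icc (0:ℝ) 1 = closure (Set.Ioo (0:ℝ) 1) := (closure_Ioo (by norm_num)).symm
    _ ⊆ closure (closure P) := closure_mono hIoo
    _ = closure P := closure_closure
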